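/- Let H₁* be the hypergraph on vertex set ℕ (positive integers) whose edges are the finite sets E ⊆ ℕ with |E| = min E. Then H₁* has no strongly maximal matching; i.e., for every matching M (pairwise disjoint family of edges) there exists a matching M' with |M' \ M| > |M \ M'| (both differences finite). -/

import Mathlib

/-- An edge of the hypergraph `H₁*`: a finite nonempty set `E` of positive
integers with `|E| = min E`. -/
def IsEdgeH1 (E : Finset ℕ) : Prop := ∃ h : E.Nonempty, E.card = E.min' h

/-- A matching of `H₁*`: a set of pairwise disjoint edges. -/
def IsMatchingH1 (M : Set (Finset ℕ)) : Prop :=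
  (∀ E ∈ M, IsEdgeH1 E) ∧ M.Pairwise fun a b => Disjoint a b

lemma edge_pos {E : Finset ℕ} (hE : IsEdgeH1 E) {x : ℕ} (hx : x ∈ E) : 0 < x := by
  obtain ⟨h, hc⟩ := hE
  have h1 : 0 < E.card := Finset.card_pos.mpr h
  have h2 := E.min'_le x hx
  omega

lemma pack_aux : ∀ (s : ℕ) (P S : Finset ℕ), S ⊆ P → S.card = s → (0 ∉ P) →
    (∀ x ∈ P, x ∉ S → ∀ y ∈ S, y < x) → S.sum id ≤ P.card →
    ∃ N : Finset (Finset ℕ), N.card = s ∧ (∀ E ∈ N, IsEdgeH1 E ∧ E ⊆ P) ∧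
      ((N : Set (Finset ℕ)).Pairwise fun a b => Disjoint a b) := by
  intro s
  induction s with
  | zero =>
    intro P S _ hcard _ _ _
    exact ⟨∅, by simp, by simp, by simp⟩
  | succ n ih =>
    intro P S hSP hcard h0 hlow hsum
    have hSne : S.Nonempty := Finset.card_pos.mp (by omega)
    obtain ⟨μ, hμS⟩ := hSne
    have hpos : ∀ y ∈ S, 0 < y := fun y hy => by
      rcases Nat.eq_zero_or_pos y with h | h
      · exact absurd (hSP hy) (h ▸ h0)
      · exact h
    have hμpos : 0 < μ := hpos μ hμS
    have hsumS : S.sum id = μ + (S.erase μ).sum id := (Finset.add_sum_erase S id hμS).symm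
    have herasecard : (S.erase μ).card = n := by
      rw [Finset.card_erase_of_mem hμS, hcard]
      omega
    have herasesum : n ≤ (S.erase μ).sum id := by
      have := Finset.card_nsmul_le_sum (S.erase μ) id 1
        (fun y hy => hpos y (Finset.mem_of_mem_erase hy))
      simpa [herasecard] using this
    -- choose μ - 1 further elements from P \ S
    have hcardPS : (P \ S).card = P.card - S.card := by
      rw [Finset.card_sdiff_of_subset hSP]
    have hle : μ - 1 ≤ (P \ S).card := by omega
    obtain ⟨T, hTsub, hTcard⟩ := Finset.exists_subset_card_eq hle
    have hTP : T ⊆ P := hTsub.trans (Finset.sdiff_subset)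
    have hTgt : ∀ x ∈ T, ∀ y ∈ S, y < x := fun x hx y hy =>
      hlow x (hTP hx) (Finset.mem_sdiff.mp (hTsub hx)).2 y hy
    have hμT : μ ∉ T := fun h => lt_irrefl μ (hTgt μ h μ hμS)
    set e : Finset ℕ := insert μ T with he
    have hecard : e.card = μ := by
      rw [he, Finset.card_insert_of_notMem hμT, hTcard]; omega
    have heP : e ⊆ P := by
      rw [he]; exact Finset.insert_subset (hSP hμS) hTP
    have hene : e.Nonempty := ⟨μ, Finset.mem_insert_self μ T⟩
    have hemin : e.min' hene = μ := by
      apply le_antisymm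
      · exact Finset.min'_le e μ (Finset.mem_insert_self μ T)
      · apply Finset.le_min'
        intro y hy
        rcases Finset.mem_insert.mp hy with h | h
        · omega
        · exact le_of_lt (hTgt y h μ hμS)
    have hedge : IsEdgeH1 e := ⟨hene, by rw [hemin, hecard]⟩
    -- recurse
    have hsub : S.erase μ ⊆ P \ e := by
      intro x hx
      have hxS := Finset.mem_of_mem_erase hx
      have hxne := Finset.ne_of_mem_erase hx
      rw [Finset.mem_sdiff]
      refine ⟨hSP hxS, ?_⟩
      rw [he, Finset.mem_insert]
      rintro (h | h)
      · exact hxne h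
      · exact absurd (hTgt x h x hxS) (lt_irrefl x)
    have hzero : 0 ∉ P \ e := fun h => h0 (Finset.mem_sdiff.mp h).1
    have hlow' : ∀ x ∈ P \ e, x ∉ S.erase μ → ∀ y ∈ S.erase μ, y < x := by
      intro x hx hxS y hy
      have hxP := (Finset.mem_sdiff.mp hx).1
      have hxe := (Finset.mem_sdiff.mp hx).2
      apply hlow x hxP _ y (Finset.mem_of_mem_erase hy)
      intro hxSfull
      rcases eq_or_ne x μ with h | h
      · exact hxe (h ▸ Finset.mem_insert_self μ T)
      · exact hxS (Finset.mem_erase.mpr ⟨h, hxSfull⟩)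
    have hsum' : (S.erase μ).sum id ≤ (P \ e).card := by
      have hPe : (P \ e).card = P.card - μ := by
        rw [Finset.card_sdiff_of_subset heP, hecard]
      omega
    have hrec := ih (P \ e) (S.erase μ) hsub herasecard hzero hlow' hsum'
    obtain ⟨N', hN'card, hN'prop, hN'pw⟩ := hrec
    have heN' : e ∉ N' := by
      intro h
      have := (hN'prop e h).2
      have : μ ∈ P \ e := this (Finset.mem_insert_self μ T)
      exact (Finset.mem_sdiff.mp this).2 (Finset.mem_insert_self μ T)
    refine ⟨insert e N', ?_, ?_, ?_⟩
    · rw [Finset.card_insert_of_notMem heN', hN'card]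
    · intro E hE
      rcases Finset.mem_insert.mp hE with h | h
      · exact h ▸ ⟨hedge, heP⟩
      · exact ⟨(hN'prop E h).1, (hN'prop E h).2.trans Finset.sdiff_subset⟩
    · rw [Finset.coe_insert]
      haveI : Std.Symm (fun a b : Finset ℕ => Disjoint a b) := ⟨fun a b h => h.symm⟩
      rw [Set.pairwise_insert_of_symm]
      refine ⟨hN'pw, ?_⟩
      intro b hb _
      have hbsub := (hN'prop b hb).2
      exact Finset.disjoint_left.mpr fun x hxe hxb => (Finset.mem_sdiff.mp (hbsub hxb)).2 hxe

/-- Exchange: replace an arbitrary subset by a sum-minimal one, which is a lower set. -/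
lemma exchange (P S : Finset ℕ) (hS : S ⊆ P) :
    ∃ S' : Finset ℕ, S' ⊆ P ∧ S'.card = S.card ∧ S'.sum id ≤ S.sum id ∧
      (∀ x ∈ P, x ∉ S' → ∀ y ∈ S', y < x) := by
  classical
  have hne : (P.powersetCard S.card).Nonempty :=
    ⟨S, Finset.mem_powersetCard.mpr ⟨hS, rfl⟩⟩
  obtain ⟨S', hS'mem, hmin⟩ := Finset.exists_min_image (P.powersetCard S.card)
    (fun T => T.sum id) hne
  obtain ⟨hS'P, hS'card⟩ := Finset.mem_powersetCard.mp hS'mem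
  refine ⟨S', hS'P, hS'card, hmin S (Finset.mem_powersetCard.mpr ⟨hS, rfl⟩), ?_⟩
  intro x hxP hxS' y hyS'
  by_contra hcon
  push_neg at hcon
  have hxy : x < y := lt_of_le_of_ne hcon (fun h => hxS' (h ▸ hyS'))
  set T := insert x (S'.erase y) with hT
  have hxnotin : x ∉ S'.erase y := fun h => hxS' (Finset.mem_of_mem_erase h)
  have hTmem : T ∈ P.powersetCard S.card := by
    apply Finset.mem_powersetCard.mpr
    constructor
    · exact Finset.insert_subset hxP ((Finset.erase_subset y S').trans hS'P)
    · rw [hT, Finset.card_insert_of_notMem hxnotin, Finset.card_erase_of_mem hyS', hS'card]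
      have : 0 < S.card := by
        rw [← hS'card]
        exact Finset.card_pos.mpr ⟨y, hyS'⟩
      omega
  have hTsum : T.sum id = x + (S'.erase y).sum id := by
    rw [hT, Finset.sum_insert hxnotin]; rfl
  have hS'sum : S'.sum id = y + (S'.erase y).sum id := (Finset.add_sum_erase S' id hyS').symm
  have := hmin T hTmem
  omega

/-- Combined packing lemma. -/
lemma pack (P S : Finset ℕ) (hS : S ⊆ P) (h0 : 0 ∉ P) (hsum : S.sum id ≤ P.card) :
    ∃ N : Finset (Finset ℕ), N.card = S.card ∧ (∀ E ∈ N, IsEdgeH1 E ∧ E ⊆ P) ∧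
      ((N : Set (Finset ℕ)).Pairwise fun a b => Disjoint a b) := by
  obtain ⟨S', hS'P, hS'card, hS'sum, hS'low⟩ := exchange P S hS
  obtain ⟨N, h1, h2, h3⟩ := pack_aux S.card P S' hS'P hS'card h0 hS'low (hS'sum.trans hsum)
  exact ⟨N, h1, h2, h3⟩

/-- Case A: M finite. -/
lemma caseA (M : Set (Finset ℕ)) (hM : IsMatchingH1 M) (hfin : M.Finite) :
    ∃ M' : Set (Finset ℕ), IsMatchingH1 M' ∧ (M \ M').Finite ∧ (M' \ M).Finite ∧
      (M \ M').ncard < (M' \ M).ncard := by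
  classical
  set V : Set ℕ := ⋃ E ∈ M, (E : Set ℕ) with hV
  have hVfin : V.Finite := Set.Finite.biUnion hfin (fun E _ => E.finite_toSet)
  set U : Set ℕ := (V ∪ {0})ᶜ with hU
  have hUinf : U.Infinite := Set.Finite.infinite_compl (hVfin.union (Set.finite_singleton 0))
  obtain ⟨u, hu⟩ := hUinf.nonempty
  have hupos : 0 < u := by
    rcases Nat.eq_zero_or_pos u with h | h
    · exfalso; exact hu (Or.inr (by simp [h]))
    · exact h
  have hU'inf : (U \ Set.Iic u).Infinite := hUinf.diff (Set.finite_Iic u)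
  obtain ⟨T, hTsub, hTcard⟩ := hU'inf.exists_subset_card_eq (u - 1)
  have hTU : ∀ x ∈ T, x ∈ U ∧ u < x := by
    intro x hx
    have := hTsub hx
    simp only [Set.mem_diff, Set.mem_Iic, not_le] at this
    exact this
  have huT : u ∉ T := fun h => lt_irrefl u (hTU u h).2
  set e : Finset ℕ := insert u T with he
  have hene : e.Nonempty := ⟨u, Finset.mem_insert_self u T⟩
  have hecard : e.card = u := by
    rw [he, Finset.card_insert_of_notMem huT, hTcard]; omega
  have hemin : e.min' hene = u := by
    apply le_antisymm
    · exact Finset.min'_le e u (Finset.mem_insert_self u T)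
    · apply Finset.le_min'
      intro y hy
      rcases Finset.mem_insert.mp hy with h | h
      · omega
      · exact le_of_lt (hTU y h).2
  have hedge : IsEdgeH1 e := ⟨hene, by rw [hemin, hecard]⟩
  have heU : ∀ x ∈ e, x ∈ U := by
    intro x hx
    rcases Finset.mem_insert.mp hx with h | h
    · exact h ▸ hu
    · exact (hTU x h).1
  have hdisj : ∀ E ∈ M, Disjoint e E := by
    intro E hE
    apply Finset.disjoint_left.mpr
    intro x hxe hxE
    exact (heU x hxe) (Or.inl (Set.mem_biUnion hE hxE))
  have heM : e ∉ M := by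
    intro h
    exact (heU u (Finset.mem_insert_self u T)) (Or.inl (Set.mem_biUnion h (by
      rw [← hemin]; exact e.min'_mem hene)))
  refine ⟨insert e M, ⟨?_, ?_⟩, ?_, ?_, ?_⟩
  · intro E hE
    rcases hE with h | h
    · exact h ▸ hedge
    · exact hM.1 E h
  · haveI : Std.Symm (fun a b : Finset ℕ => Disjoint a b) := ⟨fun a b h => h.symm⟩
    rw [Set.pairwise_insert_of_symm]
    exact ⟨hM.2, fun b hb _ => hdisj b hb⟩
  · have : M \ insert e M = ∅ := by
      apply Set.diff_eq_empty.mpr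
      exact Set.subset_insert e M
    rw [this]; exact Set.finite_empty
  · have : insert e M \ M = {e} := by
      ext x
      simp only [Set.mem_diff, Set.mem_insert_iff, Set.mem_singleton_iff]
      constructor
      · rintro ⟨h | h, h2⟩
        · exact h
        · exact absurd h h2
      · rintro rfl; exact ⟨Or.inl rfl, heM⟩
    rw [this]; exact Set.finite_singleton e
  · have h1 : M \ insert e M = ∅ := Set.diff_eq_empty.mpr (Set.subset_insert e M)
    have h2 : insert e M \ M = {e} := by
      ext x
      simp only [Set.mem_diff, Set.mem_insert_iff, Set.mem_singleton_iff]
      constructor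
      · rintro ⟨h | h, h2⟩
        · exact h
        · exact absurd h h2
      · rintro rfl; exact ⟨Or.inl rfl, heM⟩
    rw [h1, h2, Set.ncard_empty, Set.ncard_singleton]
    omega

lemma caseB (M : Set (Finset ℕ)) (hM : IsMatchingH1 M) (hinf : M.Infinite) :
    ∃ M' : Set (Finset ℕ), IsMatchingH1 M' ∧ (M \ M').Finite ∧ (M' \ M).Finite ∧
      (M \ M').ncard < (M' \ M).ncard := by
  classical
  -- the "min" of an edge in M equals its card; card is injective on M
  have hcardmem : ∀ E ∈ M, E.card ∈ E := by
    intro E hE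
    obtain ⟨h, hc⟩ := hM.1 E hE
    exact hc ▸ (hc ▸ E.min'_mem h)
  have hcardle : ∀ E ∈ M, ∀ x ∈ E, E.card ≤ x := by
    intro E hE x hx
    obtain ⟨h, hc⟩ := hM.1 E hE
    exact hc ▸ E.min'_le x hx
  have hinj : Set.InjOn Finset.card M := by
    intro E hE F hF hcard
    by_contra hne
    have hdisj := hM.2 hE hF hne
    exact Finset.disjoint_left.mp hdisj (hcardmem E hE) (hcard ▸ hcardmem F hF)
  -- two distinct edges with at least 2 elements
  have hsub2 : M \ {({1} : Finset ℕ)} ⊆ {E ∈ M | 2 ≤ E.card} := by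
    rintro E ⟨hE, hne⟩
    refine ⟨hE, ?_⟩
    obtain ⟨h, hc⟩ := hM.1 E hE
    have h1 : 1 ≤ E.card := Finset.card_pos.mpr h
    by_contra hlt
    push_neg at hlt
    have hc1 : E.card = 1 := by omega
    obtain ⟨x, hx⟩ := Finset.card_eq_one.mp hc1
    apply hne
    have hx1 : x = 1 := by
      have hmm : E.min' h ∈ E := E.min'_mem h
      have hmm2 : E.min' h ∈ ({x} : Finset ℕ) := by rw [← hx]; exact hmm
      have : E.card = x := hc.trans (Finset.mem_singleton.mp hmm2)
      omega
    simp only [Set.mem_singleton_iff]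
    rw [hx, hx1]
  have hM2inf : {E ∈ M | 2 ≤ E.card}.Infinite :=
    ((hinf.diff (Set.finite_singleton _)).mono hsub2)
  obtain ⟨Ea, hEa⟩ := hM2inf.nonempty
  obtain ⟨Eb, hEb⟩ := ((hM2inf.diff (Set.finite_singleton Ea)).nonempty)
  obtain ⟨hEbM2, hEbne⟩ := hEb
  have hEaM : Ea ∈ M := hEa.1
  have hEbM : Eb ∈ M := hEbM2.1
  have hab : Eb ≠ Ea := by simpa using hEbne
  -- second elements v, w
  have hvex : (Ea.erase Ea.card).Nonempty := by
    apply Finset.card_pos.mp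
    rw [Finset.card_erase_of_mem (hcardmem Ea hEaM)]
    have := hEa.2
    omega
  obtain ⟨v, hv⟩ := hvex
  have hvEa : v ∈ Ea := Finset.mem_of_mem_erase hv
  have hvgt : Ea.card < v :=
    lt_of_le_of_ne (hcardle Ea hEaM v hvEa) (Ne.symm (Finset.ne_of_mem_erase hv))
  have hwex : (Eb.erase Eb.card).Nonempty := by
    apply Finset.card_pos.mp
    rw [Finset.card_erase_of_mem (hcardmem Eb hEbM)]
    have := hEbM2.2
    omega
  obtain ⟨w, hw⟩ := hwex
  have hwEb : w ∈ Eb := Finset.mem_of_mem_erase hw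
  have hwgt : Eb.card < w :=
    lt_of_le_of_ne (hcardle Eb hEbM w hwEb) (Ne.symm (Finset.ne_of_mem_erase hw))
  have hvw : v ≠ w := by
    intro h
    exact Finset.disjoint_left.mp (hM.2 hEaM hEbM (Ne.symm hab)) hvEa (h ▸ hwEb)
  -- v and w are not cards of edges of M
  have hvnot : ∀ F ∈ M, F.card ≠ v := by
    intro F hF hFv
    rcases eq_or_ne F Ea with rfl | hne
    · omega
    · exact Finset.disjoint_left.mp (hM.2 hF hEaM hne) (hFv ▸ hcardmem F hF) hvEa
  have hwnot : ∀ F ∈ M, F.card ≠ w := by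
    intro F hF hFw
    rcases eq_or_ne F Eb with rfl | hne
    · omega
    · exact Finset.disjoint_left.mp (hM.2 hF hEbM hne) (hFw ▸ hcardmem F hF) hwEb
  -- an edge with large card
  obtain ⟨c, hcmem, hcgt⟩ := (hinf.image hinj).exists_gt (v + w)
  obtain ⟨Es, hEsM, hEscard⟩ := hcmem
  rw [← hEscard] at hcgt  -- hcgt : v + w < Es.card
  -- R : edges of small card
  set R : Set (Finset ℕ) := {E ∈ M | E.card ≤ Es.card} with hR
  have hRfin : R.Finite := by
    apply Set.Finite.of_finite_image (f := Finset.card)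
    · apply (Set.finite_Iic Es.card).subset
      rintro _ ⟨E, hE, rfl⟩
      exact hE.2
    · exact hinj.mono (Set.sep_subset _ _)
  set RF := hRfin.toFinset with hRF
  have hmemRF : ∀ E, E ∈ RF ↔ E ∈ M ∧ E.card ≤ Es.card := by
    intro E
    rw [hRF, Set.Finite.mem_toFinset]
    rfl
  have hEsRF : Es ∈ RF := (hmemRF Es).mpr ⟨hEsM, le_refl _⟩
  have hEaRF : Ea ∈ RF := (hmemRF Ea).mpr ⟨hEaM, by omega⟩
  have hEbRF : Eb ∈ RF := (hmemRF Eb).mpr ⟨hEbM, by omega⟩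
  -- the pool
  set P : Finset ℕ := RF.biUnion id with hP
  have hPdisj : ∀ x ∈ RF, ∀ y ∈ RF, x ≠ y → Disjoint (id x) (id y) := by
    intro x hx y hy hne
    exact hM.2 ((hmemRF x).mp hx).1 ((hmemRF y).mp hy).1 hne
  have hPcard : P.card = ∑ E ∈ RF, E.card := Finset.card_biUnion hPdisj
  have hP0 : 0 ∉ P := by
    intro h
    obtain ⟨E, hE, hmem⟩ := Finset.mem_biUnion.mp h
    exact absurd (edge_pos (hM.1 E ((hmemRF E).mp hE).1) hmem) (by omega)
  have hmemP : ∀ E ∈ RF, ∀ x ∈ E, x ∈ P := by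
    intro E hE x hx
    exact Finset.mem_biUnion.mpr ⟨E, hE, hx⟩
  -- the set S of new mins
  have hinjRF : ∀ x ∈ RF.erase Es, ∀ y ∈ RF.erase Es, x.card = y.card → x = y := by
    intro x hx y hy h
    exact hinj ((hmemRF x).mp (Finset.mem_of_mem_erase hx)).1
      ((hmemRF y).mp (Finset.mem_of_mem_erase hy)).1 h
  set S0 : Finset ℕ := (RF.erase Es).image Finset.card with hS0
  have hS0card : S0.card = RF.card - 1 := by
    rw [hS0, Finset.card_image_of_injOn hinjRF, Finset.card_erase_of_mem hEsRF]
  have hvS0 : v ∉ S0 := by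
    intro h
    obtain ⟨E, hE, hEv⟩ := Finset.mem_image.mp h
    exact hvnot E ((hmemRF E).mp (Finset.mem_of_mem_erase hE)).1 hEv
  have hwS0 : w ∉ S0 := by
    intro h
    obtain ⟨E, hE, hEw⟩ := Finset.mem_image.mp h
    exact hwnot E ((hmemRF E).mp (Finset.mem_of_mem_erase hE)).1 hEw
  set S : Finset ℕ := insert v (insert w S0) with hS
  have hScard : S.card = RF.card + 1 := by
    rw [hS, Finset.card_insert_of_notMem (by
      simp only [Finset.mem_insert]
      push_neg
      exact ⟨hvw, hvS0⟩), Finset.card_insert_of_notMem hwS0, hS0card]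
    have : 0 < RF.card := Finset.card_pos.mpr ⟨Es, hEsRF⟩
    omega
  have hSsub : S ⊆ P := by
    intro x hx
    rw [hS] at hx
    rcases Finset.mem_insert.mp hx with rfl | hx
    · exact hmemP Ea hEaRF x hvEa
    rcases Finset.mem_insert.mp hx with rfl | hx
    · exact hmemP Eb hEbRF x hwEb
    obtain ⟨E, hE, hEx⟩ := Finset.mem_image.mp hx
    have hERF := Finset.mem_of_mem_erase hE
    exact hmemP E hERF x (hEx ▸ hcardmem E ((hmemRF E).mp hERF).1)
  have hSsum : S.sum id ≤ P.card := by
    have h1 : S.sum id = v + (w + S0.sum id) := by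
      rw [hS, Finset.sum_insert (by
        simp only [Finset.mem_insert]
        push_neg
        exact ⟨hvw, hvS0⟩), Finset.sum_insert hwS0]
      rfl
    have h2 : S0.sum id = ∑ E ∈ RF.erase Es, E.card := Finset.sum_image hinjRF
    have h3 : Es.card + ∑ E ∈ RF.erase Es, E.card = ∑ E ∈ RF, E.card :=
      Finset.add_sum_erase RF Finset.card hEsRF
    omega
  -- pack
  obtain ⟨N, hNcard, hNedges, hNpw⟩ := pack P S hSsub hP0 hSsum
  rw [hScard] at hNcard
  -- edges of M outside RF are disjoint from P
  have hdisjP : ∀ E ∈ M, E ∉ RF → Disjoint E P := by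
    intro E hE hERF
    apply Finset.disjoint_left.mpr
    intro x hxE hxP
    obtain ⟨F, hF, hxF⟩ := Finset.mem_biUnion.mp hxP
    have hFM := ((hmemRF F).mp hF).1
    have hne : E ≠ F := fun h => hERF (h ▸ hF)
    exact Finset.disjoint_left.mp (hM.2 hE hFM hne) hxE hxF
  -- new edges in M must be in RF
  have hNM : ∀ e ∈ N, e ∈ M → e ∈ RF := by
    intro e he heM
    by_contra hcon
    obtain ⟨hedge, hesub⟩ := hNedges e he
    obtain ⟨hne, _⟩ := hedge
    obtain ⟨x, hx⟩ := hne
    exact Finset.disjoint_left.mp (hdisjP e heM hcon) hx (hesub hx)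
  have e1 : M \ (M \ ↑RF ∪ ↑N) = ↑(RF \ N) := by
    ext E
    constructor
    · rintro ⟨hEM, hnot⟩
      have hERF : E ∈ RF := by
        by_contra h
        exact hnot (Or.inl ⟨hEM, fun hh => h hh⟩)
      have hEN : E ∉ N := fun h => hnot (Or.inr h)
      exact Finset.mem_coe.mpr (Finset.mem_sdiff.mpr ⟨hERF, hEN⟩)
    · intro h
      have h' := Finset.mem_sdiff.mp (Finset.mem_coe.mp h)
      refine ⟨((hmemRF E).mp h'.1).1, ?_⟩
      rintro (⟨_, hh⟩ | hh)
      · exact hh h'.1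
      · exact h'.2 hh
  have e2 : (M \ ↑RF ∪ ↑N) \ M = ↑(N \ RF) := by
    ext E
    constructor
    · rintro ⟨hEun, hnM⟩
      rcases hEun with ⟨hEM, _⟩ | hEN
      · exact absurd hEM hnM
      · exact Finset.mem_coe.mpr (Finset.mem_sdiff.mpr
          ⟨hEN, fun h => hnM ((hmemRF E).mp h).1⟩)
    · intro h
      have h' := Finset.mem_sdiff.mp (Finset.mem_coe.mp h)
      exact ⟨Or.inr h'.1, fun hM' => h'.2 (hNM E h'.1 hM')⟩
  refine ⟨(M \ ↑RF) ∪ ↑N, ⟨?_, ?_⟩, ?_, ?_, ?_⟩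
  · intro E hE
    rcases hE with ⟨hE, _⟩ | hE
    · exact hM.1 E hE
    · exact (hNedges E hE).1
  · intro a ha b hb hne
    rcases ha with ⟨haM, haRF⟩ | haN <;> rcases hb with ⟨hbM, hbRF⟩ | hbN
    · exact hM.2 haM hbM hne
    · exact (hdisjP a haM (fun h => haRF (Finset.mem_coe.mpr h))).mono_right
        (hNedges b hbN).2
    · exact ((hdisjP b hbM (fun h => hbRF (Finset.mem_coe.mpr h))).mono_right
        (hNedges a haN).2).symm
    · exact hNpw haN hbN hne
  · rw [e1]
    exact (RF \ N).finite_toSet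
  · rw [e2]
    exact (N \ RF).finite_toSet
  · rw [e1, e2, Set.ncard_coe_finset, Set.ncard_coe_finset]
    have c1 := Finset.card_sdiff_add_card_inter RF N
    have c2 := Finset.card_sdiff_add_card_inter N RF
    rw [Finset.inter_comm] at c2
    omega

/-- `H₁*` has no strongly maximal matching. -/
theorem stmt_0 (M : Set (Finset ℕ)) (hM : IsMatchingH1 M) :
    ∃ M' : Set (Finset ℕ), IsMatchingH1 M' ∧ (M \ M').Finite ∧ (M' \ M).Finite ∧
      (M \ M').ncard < (M' \ M).ncard := by
  rcases Set.finite_or_infinite M with h | h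
  · exact caseA M hM h
  · exact caseB M hM h
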